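/- The product S_{ω₁} × S_{ω₁} is not a k_R-space. -/

import Mathlib

open Set Filter Topology Cardinal

/-- A `k`-space: a set is closed whenever its trace on every compact subset is closed. -/
def IsKSpace (X : Type*) [TopologicalSpace X] : Prop :=
  ∀ C : Set X, (∀ K : Set X, IsCompact K → IsClosed (Subtype.val ⁻¹' C : Set K)) → IsClosed C

/-- A `k_R`-space: every real-valued function which is continuous on each
compact subset is continuous. -/
def IsKRSpace (X : Type*) [TopologicalSpace X] : Prop :=
  ∀ f : X → ℝ, (∀ K : Set X, IsCompact K → ContinuousOn f K) → Continuous f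
/-- The sequential fan with spokes indexed by `κ`: underlying set is
`Option (κ × ℕ)`, with `none` the apex and `some (α, n)` the `n`-th point
of the `α`-th spoke. -/
def Fan (κ : Type*) : Type _ := Option (κ × ℕ)

/-- The quotient topology on the fan: each point `some (α, n)` is isolated and
a set containing the apex is open iff it contains a tail of every spoke. -/
instance Fan.instTopologicalSpace (κ : Type*) : TopologicalSpace (Fan κ) where
  IsOpen s := (none : Option (κ × ℕ)) ∈ s → ∀ α : κ, {n : ℕ | (some (α, n) : Option (κ × ℕ)) ∉ s}.Finite
  isOpen_univ := by intro _ α; exact Set.finite_empty.subset (fun n hn => hn trivial)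
  isOpen_inter := by
    intro s t hs ht hmem α
    refine ((hs hmem.1 α).union (ht hmem.2 α)).subset ?_
    intro n hn
    by_contra h
    simp only [Set.mem_union, Set.mem_setOf_eq] at h
    push_neg at h
    exact hn ⟨h.1, h.2⟩
  isOpen_sUnion := by
    intro S hS hmem α
    obtain ⟨s, hsS, hs⟩ := hmem
    refine (hS s hsS hs α).subset ?_
    intro n hn hns
    exact hn (Set.mem_sUnion.2 ⟨s, hsS, hns⟩)

/-- The apex of the sequential fan. -/
def Fan.apex {κ : Type*} : Fan κ := (none : Option (κ × ℕ))

/-- The `n`-th point of the `α`-th spoke of the sequential fan. -/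
def Fan.pt {κ : Type*} (α : κ) (n : ℕ) : Fan κ := (some (α, n) : Option (κ × ℕ))

lemma Fan.isOpen_iff {κ : Type*} {s : Set (Fan κ)} :
    IsOpen s ↔ (Fan.apex ∈ s → ∀ α : κ, {n : ℕ | Fan.pt α n ∉ s}.Finite) :=
  Iff.rfl

lemma Fan.pt_injective {κ : Type*} {α β : κ} {n m : ℕ} (h : Fan.pt α n = Fan.pt β m) :
    α = β ∧ n = m := by
  have h' : (some (α, n) : Option (κ × ℕ)) = some (β, m) := h
  simpa only [Option.some.injEq, Prod.mk.injEq] using h'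

lemma Fan.pt_ne_apex {κ : Type*} (α : κ) (n : ℕ) : Fan.pt α n ≠ Fan.apex := by
  simp [Fan.pt, Fan.apex]
  exact Option.some_ne_none _

lemma Fan.isOpen_singleton {κ : Type*} (α : κ) (n : ℕ) :
    IsOpen ({Fan.pt α n} : Set (Fan κ)) := by
  rw [Fan.isOpen_iff]
  intro h
  exact absurd h.symm (Fan.pt_ne_apex α n)

instance Fan.t1 {κ : Type*} : T1Space (Fan κ) := by
  refine ⟨fun x => ?_⟩
  rw [← isOpen_compl_iff, Fan.isOpen_iff]
  intro h α
  rcases x with _ | ⟨β, m⟩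
  · exact absurd rfl h
  · refine (Set.finite_singleton m).subset ?_
    intro n hn
    simp only [Set.mem_setOf_eq, Set.mem_compl_iff, not_not] at hn
    exact (Fan.pt_injective hn).2 ▸ rfl

lemma Fan.compact_spokes {κ : Type*} {K : Set (Fan κ)} (hK : IsCompact K) :
    {α : κ | ∃ n : ℕ, Fan.pt α n ∈ K}.Finite := by
  classical
  by_contra hinf
  set P := {α : κ | ∃ n : ℕ, Fan.pt α n ∈ K} with hP
  choose nn hnn using fun a : P => a.2
  set T : Set (Fan κ) := Set.range (fun a : P => Fan.pt a.1 (nn a)) with hT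
  have hTopen : ∀ a : P, IsOpen ({Fan.pt a.1 (nn a)} : Set (Fan κ)) :=
    fun a => Fan.isOpen_singleton _ _
  have hUopen : IsOpen Tᶜ := by
    rw [Fan.isOpen_iff]
    intro _ α
    by_cases hα : α ∈ P
    · refine (Set.finite_singleton (nn ⟨α, hα⟩)).subset ?_
      intro n hn
      simp only [Set.mem_setOf_eq, Set.mem_compl_iff, not_not, hT, Set.mem_range] at hn
      obtain ⟨⟨a, ha⟩, hEq⟩ := hn
      obtain ⟨h1, h2⟩ := Fan.pt_injective hEq
      subst h1
      simp [← h2]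
    · refine Set.Finite.subset (Set.finite_empty) ?_
      intro n hn
      simp only [Set.mem_setOf_eq, Set.mem_compl_iff, not_not, hT, Set.mem_range] at hn
      obtain ⟨a, hEq⟩ := hn
      exact absurd ((Fan.pt_injective hEq).1 ▸ a.2) hα
  set c : Option P → Set (Fan κ) := fun o => o.elim Tᶜ (fun a => {Fan.pt a.1 (nn a)}) with hc
  have hcopen : ∀ o, IsOpen (c o) := by
    rintro (_ | a)
    · exact hUopen
    · exact hTopen a
  have hccover : K ⊆ ⋃ o, c o := by
    intro x hx
    by_cases hxT : x ∈ T
    · obtain ⟨a, ha⟩ := hxT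
      exact Set.mem_iUnion.2 ⟨some a, by simp [c, ← ha]⟩
    · exact Set.mem_iUnion.2 ⟨none, hxT⟩
  obtain ⟨t, ht⟩ := hK.elim_finite_subcover c hcopen hccover
  have hmem : ∀ a : P, some a ∈ t := by
    intro a
    have := ht (hnn a)
    simp only [Set.mem_iUnion] at this
    obtain ⟨o, ho, hxo⟩ := this
    rcases o with _ | a'
    · exact absurd (Set.mem_range_self a) hxo
    · obtain ⟨h1, _⟩ := Fan.pt_injective hxo
      have : a = a' := Subtype.ext h1
      exact this ▸ ho
  have : Finite P := by
    have : Function.Injective (fun a : P => (⟨some a, hmem a⟩ : {o // o ∈ t})) := by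
      intro a b hab
      simpa [Subtype.ext_iff] using hab
    exact Finite.of_injective _ this
  exact hinf (Set.toFinite P)

section Aux
variable {ι : Type} (r : ι → ι → Prop) (e : ∀ b : ι, {a // r a b} → ℕ)

/-- The "diagonal" set used to define the discontinuous function. -/
def Dset : Set (Fan ι × Fan ι) :=
  {x | ∃ (α β : ι) (h : r α β),
    x = (Fan.pt α (e β ⟨α, h⟩), Fan.pt β (e β ⟨α, h⟩))}

open Classical in
noncomputable def fanFun (x : Fan ι × Fan ι) : ℝ :=
  if x ∈ Dset r e then 1 else 0

lemma fanFun_apex_fst (q : Fan ι) : fanFun r e (Fan.apex, q) = 0 := by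
  rw [fanFun, if_neg]
  rintro ⟨α, β, h, hEq⟩
  exact Fan.pt_ne_apex α _ (congrArg Prod.fst hEq).symm

lemma fanFun_apex_snd (p : Fan ι) : fanFun r e (p, Fan.apex) = 0 := by
  rw [fanFun, if_neg]
  rintro ⟨α, β, h, hEq⟩
  exact Fan.pt_ne_apex β _ (congrArg Prod.snd hEq).symm

lemma fanFun_of_mem {x : Fan ι × Fan ι} (hx : x ∈ Dset r e) : fanFun r e x = 1 :=
  if_pos hx

lemma fanFun_of_not_mem {x : Fan ι × Fan ι} (hx : x ∉ Dset r e) : fanFun r e x = 0 :=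
  if_neg hx

/-- local constancy gives continuity within a set -/
lemma contWithinAt_of_locally_const {X : Type*} [TopologicalSpace X] {f : X → ℝ}
    {S : Set X} {x : X} (W : Set X) (hW : IsOpen W) (hx : x ∈ W)
    (hconst : ∀ y ∈ W ∩ S, f y = f x) : ContinuousWithinAt f S x := by
  have hev : f =ᶠ[𝓝[S] x] (fun _ => f x) :=
    mem_nhdsWithin.2 ⟨W, hW, hx, fun y hy => hconst y hy⟩
  exact (Filter.Tendsto.congr' hev.symm tendsto_const_nhds :)

lemma fanFun_continuousOn (F G : Set ι) (hF : F.Finite) (hG : G.Finite) :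
    ContinuousOn (fanFun r e)
      ({p : Fan ι | ∀ γ k, p = Fan.pt γ k → γ ∈ F} ×ˢ
       {q : Fan ι | ∀ γ k, q = Fan.pt γ k → γ ∈ G}) := by
  classical
  set AF := {p : Fan ι | ∀ γ k, p = Fan.pt γ k → γ ∈ F} with hAF
  set AG := {q : Fan ι | ∀ γ k, q = Fan.pt γ k → γ ∈ G} with hAG
  set S := AF ×ˢ AG with hS
  rintro ⟨p, q⟩ hx
  rcases p with _ | ⟨α, n⟩ <;> rcases q with _ | ⟨β, m⟩
  · -- (apex, apex)
    set Bad := Dset r e ∩ S with hBad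
    have hBadFin : Bad.Finite := by
      set g : ι × ι → Fan ι × Fan ι := fun ab =>
        if h : r ab.1 ab.2 then
          (Fan.pt ab.1 (e ab.2 ⟨ab.1, h⟩), Fan.pt ab.2 (e ab.2 ⟨ab.1, h⟩))
        else (Fan.apex, Fan.apex) with hg
      refine ((hF.prod hG).image g).subset ?_
      rintro y ⟨⟨α, β, h, hEq⟩, hyS⟩
      refine ⟨(α, β), ⟨?_, ?_⟩, ?_⟩
      · exact hyS.1 α _ (by rw [hEq])
      · exact hyS.2 β _ (by rw [hEq])
      · simp only [hg, dif_pos h]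
        exact hEq.symm
    have hBadClosed : IsClosed Bad := hBadFin.isClosed
    refine contWithinAt_of_locally_const Badᶜ hBadClosed.isOpen_compl ?_ ?_
    · intro hBadMem
      obtain ⟨⟨α, β, h, hEq⟩, _⟩ := hBadMem
      exact Fan.pt_ne_apex α _ (congrArg Prod.fst hEq).symm
    · rintro y ⟨hyW, hyS⟩
      change _ = fanFun r e (Fan.apex, Fan.apex)
      rw [fanFun_apex_fst]
      exact fanFun_of_not_mem r e (fun hD => hyW ⟨hD, hyS⟩)
  · -- (apex, pt β m)
    refine contWithinAt_of_locally_const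
      ({p' : Fan ι | (p', Fan.pt β m) ∉ Dset r e} ×ˢ {Fan.pt β m}) ?_ ?_ ?_
    · refine IsOpen.prod ?_ (Fan.isOpen_singleton β m)
      rw [Fan.isOpen_iff]
      intro _ α
      refine (Set.finite_singleton m).subset ?_
      intro n hn
      simp only [Set.mem_setOf_eq, not_not] at hn
      obtain ⟨α', β', h, hEq⟩ := hn
      obtain ⟨hα, hn'⟩ := Fan.pt_injective (congrArg Prod.fst hEq)
      obtain ⟨hβ, hm'⟩ := Fan.pt_injective (congrArg Prod.snd hEq)
      simp only [Set.mem_singleton_iff, hn', hm']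
    · refine ⟨?_, rfl⟩
      rintro ⟨α', β', h, hEq⟩
      exact Fan.pt_ne_apex α' _ (congrArg Prod.fst hEq).symm
    · rintro ⟨p', q'⟩ ⟨⟨hp', hq'⟩, -⟩
      simp only [Set.mem_setOf_eq, Set.mem_singleton_iff] at hp' hq'
      subst hq'
      change _ = fanFun r e (Fan.apex, Fan.pt β m)
      rw [fanFun_apex_fst]
      exact fanFun_of_not_mem r e hp'
  · -- (pt α n, apex)
    refine contWithinAt_of_locally_const
      ({Fan.pt α n} ×ˢ {q' : Fan ι | (Fan.pt α n, q') ∉ Dset r e}) ?_ ?_ ?_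
    · refine IsOpen.prod (Fan.isOpen_singleton α n) ?_
      rw [Fan.isOpen_iff]
      intro _ β
      refine (Set.finite_singleton n).subset ?_
      intro m hm
      simp only [Set.mem_setOf_eq, not_not] at hm
      obtain ⟨α', β', h, hEq⟩ := hm
      obtain ⟨hα, hn'⟩ := Fan.pt_injective (congrArg Prod.fst hEq)
      obtain ⟨hβ, hm'⟩ := Fan.pt_injective (congrArg Prod.snd hEq)
      simp only [Set.mem_singleton_iff, hm', ← hn']
    · refine ⟨rfl, ?_⟩
      rintro ⟨α', β', h, hEq⟩
      exact Fan.pt_ne_apex β' _ (congrArg Prod.snd hEq).symm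
    · rintro ⟨p', q'⟩ ⟨⟨hp', hq'⟩, -⟩
      simp only [Set.mem_setOf_eq, Set.mem_singleton_iff] at hp' hq'
      subst hp'
      change _ = fanFun r e (Fan.pt α n, Fan.apex)
      rw [fanFun_apex_snd]
      exact fanFun_of_not_mem r e hq'
  · -- (pt α n, pt β m): isolated point
    refine contWithinAt_of_locally_const ({Fan.pt α n} ×ˢ {Fan.pt β m})
      ((Fan.isOpen_singleton α n).prod (Fan.isOpen_singleton β m)) (by constructor <;> rfl) ?_
    rintro y ⟨⟨hy1, hy2⟩, -⟩
    simp only [Set.mem_singleton_iff] at hy1 hy2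
    rw [show y = (Fan.pt α n, Fan.pt β m) from Prod.ext hy1 hy2]
    rfl


theorem main_aux (htri : ∀ a b : ι, a ≠ b → r a b ∨ r b a)
    (hIio : ∀ b : ι, {a | r a b}.Countable)
    (hunc : ¬ Countable ι)
    (he : ∀ b, Function.Injective (e b)) :
    ¬ IsKRSpace (Fan ι × Fan ι) := by
  intro hKR
  have hcont : ∀ K : Set (Fan ι × Fan ι), IsCompact K → ContinuousOn (fanFun r e) K := by
    intro K hK
    have hF := Fan.compact_spokes (hK.image continuous_fst)
    have hG := Fan.compact_spokes (hK.image continuous_snd)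
    refine (fanFun_continuousOn r e _ _ hF hG).mono ?_
    rintro ⟨p, q⟩ hpq
    constructor
    · intro γ k hp; exact ⟨k, hp ▸ Set.mem_image_of_mem Prod.fst hpq⟩
    · intro γ k hq; exact ⟨k, hq ▸ Set.mem_image_of_mem Prod.snd hpq⟩
  have hc : Continuous (fanFun r e) := hKR (fanFun r e) hcont
  have h0 : fanFun r e (Fan.apex, Fan.apex) = 0 := fanFun_apex_fst r e _
  have hnb : fanFun r e ⁻¹' (Set.Iio 1) ∈ 𝓝 ((Fan.apex, Fan.apex) : Fan ι × Fan ι) :=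
    (isOpen_Iio.preimage hc).mem_nhds (by simp [Set.mem_preimage, h0])
  rw [mem_nhds_prod_iff] at hnb
  obtain ⟨u, hu, v, hv, huv⟩ := hnb
  obtain ⟨U, hUu, hUopen, hUapex⟩ := mem_nhds_iff.mp hu
  obtain ⟨V, hVv, hVopen, hVapex⟩ := mem_nhds_iff.mp hv
  have hUfin := (Fan.isOpen_iff.mp hUopen) hUapex
  have hVfin := (Fan.isOpen_iff.mp hVopen) hVapex
  set uu : ι → ℕ := fun α => (hUfin α).toFinset.sup id + 1 with huu
  set vv : ι → ℕ := fun β => (hVfin β).toFinset.sup id + 1 with hvv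
  have hUmem : ∀ α k, uu α ≤ k → Fan.pt α k ∈ U := by
    intro α k hk
    by_contra hcon
    have h1 : k ∈ (hUfin α).toFinset := (hUfin α).mem_toFinset.2 hcon
    have h2 := Finset.le_sup (f := id) h1
    simp only [id] at h2
    simp only [huu] at hk
    omega
  have hVmem : ∀ β k, vv β ≤ k → Fan.pt β k ∈ V := by
    intro β k hk
    by_contra hcon
    have h1 : k ∈ (hVfin β).toFinset := (hVfin β).mem_toFinset.2 hcon
    have h2 := Finset.le_sup (f := id) h1
    simp only [id] at h2
    simp only [hvv] at hk
    omega
  -- find an uncountable fiber of uu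
  have hfib : ∃ n0 : ℕ, ¬ (uu ⁻¹' {n0}).Countable := by
    by_contra hcon
    push_neg at hcon
    have hun : (⋃ n, uu ⁻¹' {n}) = Set.univ := by ext a; simp
    exact hunc (Set.countable_univ_iff.mp
      (hun ▸ Set.countable_iUnion hcon))
  obtain ⟨n0, hA⟩ := hfib
  have hAinf : (uu ⁻¹' {n0}).Infinite := fun hfin => hA hfin.countable
  set emb : ℕ ↪ (uu ⁻¹' {n0}) := Set.Infinite.natEmbedding _ hAinf with hemb
  -- bound the range of emb
  have hbdd : ∃ b : ι, ∀ i : ℕ, r (emb i : ι) b := by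
    have hcnt : (⋃ i : ℕ, ({c | r c (emb i : ι)} ∪ {(emb i : ι)})).Countable :=
      Set.countable_iUnion (fun i => (hIio _).union (Set.countable_singleton _))
    have hne : (⋃ i : ℕ, ({c | r c (emb i : ι)} ∪ {(emb i : ι)}))ᶜ.Nonempty := by
      by_contra hcon
      rw [Set.not_nonempty_iff_eq_empty, Set.compl_empty_iff] at hcon
      exact hunc (Set.countable_univ_iff.mp (hcon ▸ hcnt))
    obtain ⟨b, hb⟩ := hne
    refine ⟨b, fun i => ?_⟩
    have hbi : b ∉ {c | r c (emb i : ι)} ∪ {(emb i : ι)} :=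
      fun h => hb (Set.mem_iUnion.2 ⟨i, h⟩)
    have hne' : (emb i : ι) ≠ b := fun h => hbi (Or.inr h.symm)
    rcases htri _ b hne' with h | h
    · exact h
    · exact absurd (Or.inl h) hbi
  obtain ⟨b, hb⟩ := hbdd
  set t : ℕ → ℕ := fun i => e b ⟨(emb i : ι), hb i⟩ with ht
  have htinj : Function.Injective t := by
    intro i j hij
    have h1 := he b hij
    have h2 : (emb i : ι) = (emb j : ι) := by simpa using h1
    have h3 : emb i = emb j := Subtype.ext h2
    exact emb.injective h3
  have hex : ∃ i, max n0 (vv b) ≤ t i := by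
    by_contra hcon
    push_neg at hcon
    have hsub : Set.range t ⊆ Set.Iio (max n0 (vv b)) := by
      rintro _ ⟨i, rfl⟩; exact hcon i
    exact (Set.infinite_range_of_injective htinj) ((Set.finite_Iio _).subset hsub)
  obtain ⟨i, hi⟩ := hex
  have hαA : (emb i : ι) ∈ uu ⁻¹' {n0} := (emb i).2
  have huuα : uu (emb i : ι) = n0 := hαA
  have hz : (Fan.pt (emb i : ι) (t i), Fan.pt b (t i)) ∈ Dset r e := ⟨_, _, hb i, rfl⟩
  have hz1 : Fan.pt (emb i : ι) (t i) ∈ U := by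
    refine hUmem _ _ ?_
    rw [huuα]
    exact le_trans (le_max_left _ _) hi
  have hz2 : Fan.pt b (t i) ∈ V := hVmem _ _ (le_trans (le_max_right _ _) hi)
  have hlt : fanFun r e (Fan.pt (emb i : ι) (t i), Fan.pt b (t i)) < 1 :=
    huv ⟨hUu hz1, hVv hz2⟩
  rw [fanFun_of_mem r e hz] at hlt
  exact lt_irrefl 1 hlt

end Aux



/-- The product `S_{ω₁} × S_{ω₁}` is not a `k_R`-space. -/
theorem not_isKRSpace_fan_aleph_one_square (ι : Type) (hι : #ι = aleph 1) :
    ¬ IsKRSpace (Fan ι × Fan ι) := by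
  obtain ⟨r, wo, hr⟩ := Cardinal.ord_eq ι
  haveI := wo
  have htri : ∀ a b : ι, a ≠ b → r a b ∨ r b a := by
    intro a b hab
    rcases trichotomous_of r a b with h | h | h
    · exact Or.inl h
    · exact absurd h hab
    · exact Or.inr h
  have hunc : ¬ Countable ι := by
    intro h
    have h1 : #ι ≤ ℵ₀ := Cardinal.mk_le_aleph0
    rw [hι] at h1
    exact absurd (lt_of_lt_of_le Cardinal.aleph0_lt_aleph_one h1) (lt_irrefl _)
  have hIio : ∀ b : ι, {a | r a b}.Countable := by
    intro b
    have h1 : #{a // r a b} = (Ordinal.typein r b).card := Ordinal.card_typein b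
    have h2 : (Ordinal.typein r b).card < #ι := Cardinal.card_typein_lt (r := r) b hr
    rw [hι] at h2
    refine (Cardinal.countable_iff_lt_aleph_one _).mpr ?_
    rw [show #↥{a | r a b} = #{a // r a b} from rfl, h1]
    exact h2
  have hcnt : ∀ b : ι, Countable {a // r a b} := fun b => (hIio b).to_subtype
  choose e he using fun b : ι => Countable.exists_injective_nat {a // r a b}
  exact main_aux r e htri hIio hunc he
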